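/- Let X be a locally compact metrisable space with pairwise commuting continuous maps φ₁,…,φ_d : X → X and let J ⊆ {1,…,d}. Let F be the ordinal-indexed family of subsets of X defined by transfinite recursion: F(0) = X, F(γ+1) = N_J(F(γ)) for every ordinal γ, and F(β) = ⋂_{γ<β} F(γ) for every limit ordinal β. Then there exists a least ordinal γ₀ with F(γ₀+1) = F(γ₀) (the strong J-centre and its depth), and F(γ₀) equals the closure of the set X_{Jr} of J-recurrent points; moreover F(γ) ⊇ closure(X_{Jr}) for every ordinal γ. -/

import Mathlib

open Filter Topology Set

/-- `phiIter φ n = φ₁^[n₁] ∘ ⋯ ∘ φ_d^[n_d]`. -/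
def phiIter {X : Type*} {d : ℕ} (φ : Fin d → X → X) (n : Fin d → ℕ) : X → X :=
  (List.ofFn fun j : Fin d => (φ j)^[n j]).foldr (· ∘ ·) id

/-- A point is `J`-recurrent if `φ_{n_k}(x) → x` along a sequence strictly
increasing in the directions of `J`. -/
def JRecurrent {X : Type*} [TopologicalSpace X] {d : ℕ} (φ : Fin d → X → X)
    (J : Set (Fin d)) (x : X) : Prop :=
  ∃ n : ℕ → Fin d → ℕ, (∀ j ∈ J, StrictMono fun k => n k j) ∧
    Tendsto (fun k => phiIter φ (n k) x) atTop (𝓝 x)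

/-- `NJ φ J Y` is the set of points of `Y` which are *not* `J`-wandering for the
subsystem on `Y`. -/
def NJ {X : Type*} [TopologicalSpace X] {d : ℕ} (φ : Fin d → X → X)
    (J : Set (Fin d)) (Y : Set X) : Set X :=
  {y ∈ Y | ∀ V : Set X, IsOpen V → y ∈ V →
    ∃ n : Fin d → ℕ, (∀ j ∈ J, 0 < n j) ∧ ∃ z ∈ V ∩ Y, phiIter φ n z ∈ V ∩ Y}

/-! ### Auxiliary lemmas about `phiIter` -/

theorem phiIter_succ' {X : Type*} {d : ℕ} (φ : Fin (d+1) → X → X) (n : Fin (d+1) → ℕ) :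
    phiIter φ n = (φ 0)^[n 0] ∘ phiIter (fun j => φ j.succ) (fun j => n j.succ) := by
  simp only [phiIter, List.ofFn_succ, List.foldr_cons]

theorem phiIter_zero' {X : Type*} : ∀ {d : ℕ} (φ : Fin d → X → X),
    phiIter φ (fun _ => 0) = id := by
  intro d
  induction d with
  | zero => intro φ; rfl
  | succ d ih => intro φ; rw [phiIter_succ']; simp [ih]

theorem commute_phiIter {X : Type*} : ∀ {d : ℕ} (φ : Fin d → X → X) (g : X → X),
    (∀ j, Function.Commute g (φ j)) → ∀ n, Function.Commute g (phiIter φ n) := by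
  intro d
  induction d with
  | zero => intro φ g _ n; intro x; rfl
  | succ d ih =>
    intro φ g hg n
    rw [phiIter_succ']
    exact ((hg 0).iterate_right (n 0)).comp_right (ih _ g (fun j => hg j.succ) _)

theorem phiIter_add {X : Type*} : ∀ {d : ℕ} (φ : Fin d → X → X),
    (∀ i j, Function.Commute (φ i) (φ j)) → ∀ n m : Fin d → ℕ,
    phiIter φ (fun j => n j + m j) = phiIter φ n ∘ phiIter φ m := by
  intro d
  induction d with
  | zero => intro φ _ n m; rfl
  | succ d ih =>
    intro φ hc n m
    rw [phiIter_succ', phiIter_succ', phiIter_succ', Function.iterate_add]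
    have h := ih (fun j => φ j.succ) (fun i j => hc i.succ j.succ)
      (fun j => n j.succ) (fun j => m j.succ)
    rw [h]
    have hsw : Function.Commute ((φ 0)^[m 0])
        (phiIter (fun j => φ j.succ) (fun j => n j.succ)) :=
      commute_phiIter _ _ (fun j => (hc 0 j.succ).iterate_left (m 0)) _
    calc (φ 0)^[n 0] ∘ (φ 0)^[m 0] ∘
          (phiIter (fun j => φ j.succ) (fun j => n j.succ) ∘
            phiIter (fun j => φ j.succ) (fun j => m j.succ))
        = (φ 0)^[n 0] ∘ ((φ 0)^[m 0] ∘ phiIter (fun j => φ j.succ) (fun j => n j.succ)) ∘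
            phiIter (fun j => φ j.succ) (fun j => m j.succ) := rfl
      _ = _ := by rw [hsw.comp_eq]; rfl

theorem continuous_phiIter {X : Type*} [TopologicalSpace X] :
    ∀ {d : ℕ} (φ : Fin d → X → X), (∀ j, Continuous (φ j)) →
    ∀ n, Continuous (phiIter φ n) := by
  intro d
  induction d with
  | zero => intro φ _ n; exact continuous_id
  | succ d ih =>
    intro φ hc n
    rw [phiIter_succ']
    exact ((hc 0).iterate (n 0)).comp (ih _ (fun j => hc j.succ) _)

/-! ### Dynamical lemmas -/

section Dyn
variable {X : Type*} [TopologicalSpace X] {d : ℕ} {φ : Fin d → X → X}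
  (hcont : ∀ j, Continuous (φ j)) (hcomm : ∀ i j, Function.Commute (φ i) (φ j))
  {J : Set (Fin d)}
include hcont hcomm

theorem jrec_invariant (m : Fin d → ℕ) {x : X} (hx : JRecurrent φ J x) :
    JRecurrent φ J (phiIter φ m x) := by
  obtain ⟨n, hsm, htend⟩ := hx
  refine ⟨n, hsm, ?_⟩
  have h1 : Tendsto (fun k => phiIter φ m (phiIter φ (n k) x)) atTop
      (𝓝 (phiIter φ m x)) :=
    ((continuous_phiIter φ hcont m).continuousAt.tendsto).comp htend
  refine h1.congr fun k => ?_
  have h3 := phiIter_add φ hcomm (n k) m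
  have h2 := phiIter_add φ hcomm m (n k)
  calc phiIter φ m (phiIter φ (n k) x) = phiIter φ (fun j => m j + n k j) x := by
        rw [h2]; rfl
    _ = phiIter φ (fun j => n k j + m j) x := by simp [Nat.add_comm]
    _ = phiIter φ (n k) (phiIter φ m x) := by rw [h3]; rfl

theorem closure_jrec_subset_NJ {Y : Set X}
    (hY : closure {x : X | JRecurrent φ J x} ⊆ Y) :
    closure {x : X | JRecurrent φ J x} ⊆ NJ φ J Y := by
  intro y hy
  refine ⟨hY hy, fun V hVo hyV => ?_⟩
  obtain ⟨x, hxV, hxR⟩ := mem_closure_iff.1 hy V hVo hyV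
  have hxR2 := hxR
  obtain ⟨n, hsm, htend⟩ := hxR2
  have hev : ∀ᶠ k in atTop, phiIter φ (n k) x ∈ V :=
    htend.eventually_mem (hVo.mem_nhds hxV)
  obtain ⟨k, hk1, hkV⟩ := ((eventually_ge_atTop 1).and hev).exists
  refine ⟨n k, fun j hj => ?_, x, ⟨hxV, hY (subset_closure hxR)⟩, hkV,
    hY (subset_closure (jrec_invariant hcont hcomm (n k) hxR))⟩
  exact lt_of_le_of_lt (Nat.zero_le (n 0 j)) (hsm j hj (Nat.lt_of_lt_of_le Nat.zero_lt_one hk1))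

/-- Composite non-wandering: coordinates in `J` can be made arbitrarily large. -/
theorem NJ_iterate {Y : Set X} (hY : NJ φ J Y = Y) (K : ℕ) :
    ∀ y ∈ Y, ∀ V : Set X, IsOpen V → y ∈ V →
    ∃ n : Fin d → ℕ, (∀ j ∈ J, K ≤ n j) ∧ ∃ z ∈ V ∩ Y, phiIter φ n z ∈ V := by
  induction K with
  | zero =>
    intro y hy V _ hyV
    exact ⟨fun _ => 0, fun j _ => Nat.zero_le _, y, ⟨hyV, hy⟩,
      by rw [phiIter_zero']; exact hyV⟩
  | succ K ih =>
    intro y hy V hVo hyV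
    obtain ⟨n, hn, z, ⟨hzV, hzY⟩, hφz⟩ := ih y hy V hVo hyV
    have hz' : z ∈ NJ φ J Y := hY.symm ▸ hzY
    have hWo : IsOpen (V ∩ (phiIter φ n) ⁻¹' V) :=
      hVo.inter ((continuous_phiIter φ hcont n).isOpen_preimage V hVo)
    obtain ⟨m, hm, w, ⟨hwW, hwY⟩, hres⟩ := hz'.2 _ hWo ⟨hzV, hφz⟩
    refine ⟨fun j => n j + m j, fun j hj => Nat.add_le_add (hn j hj) (hm j hj), w,
      ⟨hwW.1, hwY⟩, ?_⟩
    rw [phiIter_add φ hcomm n m]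
    exact hres.1.2

/-- The key construction: any set fixed by `NJ` consists of limits of
`J`-recurrent points. -/
theorem fixed_subset_closure [LocallyCompactSpace X]
    [TopologicalSpace.MetrizableSpace X] {Y : Set X} (hY : NJ φ J Y = Y) :
    Y ⊆ closure {x : X | JRecurrent φ J x} := by
  letI : MetricSpace X := TopologicalSpace.metrizableSpaceMetric X
  intro y hy
  rw [mem_closure_iff]
  intro U hUo hyU
  set r : ℕ → ℝ := fun k => 1 / (k + 1) with hr_def
  have hrpos : ∀ k, 0 < r k := fun k => by positivity
  set P : ℕ → Set X × X → Prop := fun k p =>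
    IsOpen p.1 ∧ p.2 ∈ p.1 ∧ p.2 ∈ Y ∧ p.1 ⊆ Metric.ball p.2 (r k) with hP_def
  have hstep : ∀ k (p : Set X × X), P k p → ∃ q : Set X × X, P (k+1) q ∧
      closure q.1 ⊆ p.1 ∧ IsCompact (closure q.1) ∧
      ∃ n : Fin d → ℕ, (∀ j ∈ J, k+1 ≤ n j) ∧ ∀ x ∈ closure q.1, phiIter φ n x ∈ p.1 := by
    rintro k ⟨V, c⟩ ⟨hVo, hcV, hcY, -⟩
    obtain ⟨n, hn, z, ⟨hzV, hzY⟩, hφz⟩ := NJ_iterate hcont hcomm hY (k+1) c hcY V hVo hcV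
    set O := (V ∩ (phiIter φ n)⁻¹' V) ∩ Metric.ball z (r (k+1)) with hO_def
    have hOo : IsOpen O :=
      ((hVo.inter ((continuous_phiIter φ hcont n).isOpen_preimage V hVo)).inter
        Metric.isOpen_ball)
    have hzO : z ∈ O := ⟨⟨hzV, hφz⟩, Metric.mem_ball_self (hrpos (k+1))⟩
    obtain ⟨K, hKc, hzint, hKO⟩ := exists_compact_subset hOo hzO
    have hclK : closure (interior K) ⊆ K := closure_minimal interior_subset hKc.isClosed
    refine ⟨(interior K, z), ⟨isOpen_interior, hzint, hzY,
        fun x hx => (hKO (interior_subset hx)).2⟩,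
      fun x hx => (hKO (hclK hx)).1.1,
      hKc.of_isClosed_subset isClosed_closure hclK,
      n, hn, fun x hx => (hKO (hclK hx)).1.2⟩
  have hp0 : P 0 (U ∩ Metric.ball y (r 0), y) :=
    ⟨hUo.inter Metric.isOpen_ball, ⟨hyU, Metric.mem_ball_self (hrpos 0)⟩, hy,
      inter_subset_right⟩
  let g : ∀ k : ℕ, {p : Set X × X // P k p} := fun k =>
    Nat.rec ⟨_, hp0⟩
      (fun k ih => ⟨(hstep k ih.1 ih.2).choose, (hstep k ih.1 ih.2).choose_spec.1⟩) k
  have hg : ∀ k, closure (g (k+1)).1.1 ⊆ (g k).1.1 ∧ IsCompact (closure (g (k+1)).1.1) ∧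
      ∃ n : Fin d → ℕ, (∀ j ∈ J, k+1 ≤ n j) ∧
        ∀ x ∈ closure (g (k+1)).1.1, phiIter φ n x ∈ (g k).1.1 :=
    fun k => (hstep k (g k).1 (g k).2).choose_spec.2
  set C : ℕ → Set X := fun k => closure (g (k+1)).1.1 with hC_def
  have hCne : ∀ k, (C k).Nonempty := fun k =>
    ⟨(g (k+1)).1.2, subset_closure (g (k+1)).2.2.1⟩
  have hCnest : ∀ k, C (k+1) ⊆ C k := fun k =>
    (hg (k+1)).1.trans subset_closure
  obtain ⟨x, hx⟩ := IsCompact.nonempty_iInter_of_sequence_nonempty_isCompact_isClosed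
    C hCnest hCne (hg 0).2.1 (fun k => isClosed_closure)
  have hxC : ∀ k, x ∈ C k := fun k => mem_iInter.1 hx k
  have hxV : ∀ k, x ∈ (g k).1.1 := fun k => (hg k).1 (hxC k)
  set nseq : ℕ → Fin d → ℕ := fun k => (hg k).2.2.choose with hnseq_def
  have hn1 : ∀ k, ∀ j ∈ J, k+1 ≤ nseq k j := fun k => (hg k).2.2.choose_spec.1
  have hn2 : ∀ k, phiIter φ (nseq k) x ∈ (g k).1.1 := fun k =>
    (hg k).2.2.choose_spec.2 x (hxC k)
  have hdist : ∀ k, dist (phiIter φ (nseq k) x) x ≤ 2 * r k := by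
    intro k
    have hb := (g k).2.2.2.2
    have h1 := hb (hn2 k)
    have h2 := hb (hxV k)
    rw [Metric.mem_ball] at h1 h2
    calc dist (phiIter φ (nseq k) x) x
        ≤ dist (phiIter φ (nseq k) x) (g k).1.2 + dist (g k).1.2 x := dist_triangle _ _ _
      _ ≤ r k + r k := add_le_add h1.le (by rw [dist_comm]; exact h2.le)
      _ = 2 * r k := by ring
  have htend : Tendsto (fun k => phiIter φ (nseq k) x) atTop (𝓝 x) := by
    rw [tendsto_iff_dist_tendsto_zero]
    apply squeeze_zero (fun k => dist_nonneg) hdist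
    have : Tendsto (fun k : ℕ => 1 / ((k : ℝ) + 1)) atTop (𝓝 0) :=
      tendsto_one_div_add_atTop_nhds_zero_nat
    simpa [hr_def] using this.const_mul 2
  let ks : ℕ → ℕ := fun i =>
    Nat.rec 0 (fun _ k => max (k + 1) ((Finset.univ.sup (nseq k)) + 1)) i
  have hks_succ : ∀ i, ks (i+1) = max (ks i + 1) ((Finset.univ.sup (nseq (ks i))) + 1) :=
    fun i => rfl
  have hks_mono : StrictMono ks := strictMono_nat_of_lt_succ fun i => by
    rw [hks_succ]; exact lt_of_lt_of_le (Nat.lt_succ_self _) (le_max_left _ _)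
  have hks_jump : ∀ i, ∀ j ∈ J, nseq (ks i) j < nseq (ks (i+1)) j := by
    intro i j hj
    have h1 : nseq (ks i) j ≤ Finset.univ.sup (nseq (ks i)) :=
      Finset.le_sup (Finset.mem_univ j)
    have h2 : Finset.univ.sup (nseq (ks i)) + 1 ≤ ks (i+1) := by
      rw [hks_succ]; exact le_max_right _ _
    have h3 := hn1 (ks (i+1)) j hj
    omega
  refine ⟨x, ?_, (⟨fun i => nseq (ks i), fun j hj => strictMono_nat_of_lt_succ
    (fun i => hks_jump i j hj), htend.comp hks_mono.tendsto_atTop⟩ : JRecurrent φ J x)⟩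
  exact (hxV 0).1

end Dyn

/-- Lemma 16 (`cent2`): if `F` is the transfinite family `F(0) = X`,
`F(γ+1) = N_J(F(γ))`, `F(β) = ⋂_{γ<β} F(γ)` for limit `β`, then there is a least
ordinal `γ₀` with `F(γ₀+1) = F(γ₀)` (the strong `J`-centre and its depth), the set
`F(γ₀)` is the closure of the `J`-recurrent points, and every `F(γ)` contains this
closure. -/
theorem strong_JCentre_eq_closure_JRecurrent {X : Type} [TopologicalSpace X]
    [LocallyCompactSpace X] [TopologicalSpace.MetrizableSpace X] {d : ℕ}
    (φ : Fin d → X → X) (hcont : ∀ j, Continuous (φ j))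
    (hcomm : ∀ i j, Function.Commute (φ i) (φ j)) (J : Set (Fin d))
    (F : Ordinal → Set X) (hF0 : F 0 = Set.univ)
    (hFsucc : ∀ γ : Ordinal, F (γ + 1) = NJ φ J (F γ))
    (hFlim : ∀ β : Ordinal, Order.IsSuccLimit β → F β = ⋂ γ ∈ Set.Iio β, F γ) :
    (∃ γ₀ : Ordinal, F (γ₀ + 1) = F γ₀ ∧
        (∀ γ : Ordinal, F (γ + 1) = F γ → γ₀ ≤ γ) ∧
        F γ₀ = closure {x : X | JRecurrent φ J x}) ∧
    ∀ γ : Ordinal, closure {x : X | JRecurrent φ J x} ⊆ F γ := by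
  -- monotonicity
  have hmono : ∀ δ γ : Ordinal, γ ≤ δ → F δ ⊆ F γ := by
    intro δ
    induction δ using Ordinal.limitRecOn with
    | zero =>
      intro γ hγ
      rw [nonpos_iff_eq_zero.1 hγ]
    | add_one δ ih =>
      intro γ hγ
      rcases eq_or_lt_of_le hγ with h | h
      · rw [← h]
      · have hγδ : γ ≤ δ := Order.lt_add_one_iff.1 h
        have h1 : F (Order.succ δ) ⊆ F δ := by
          rw [← Ordinal.add_one_eq_succ, hFsucc]
          exact fun x hx => hx.1
        exact h1.trans (ih γ hγδ)
    | limit β hβ ih =>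
      intro γ hγ
      rcases eq_or_lt_of_le hγ with h | h
      · rw [← h]
      · rw [hFlim β hβ]
        exact biInter_subset_of_mem h
  -- part 2 : every F γ contains closure of recurrent points
  have part2 : ∀ γ : Ordinal, closure {x : X | JRecurrent φ J x} ⊆ F γ := by
    intro γ
    induction γ using Ordinal.limitRecOn with
    | zero => rw [hF0]; exact subset_univ _
    | add_one γ ih =>
      rw [hFsucc]
      exact closure_jrec_subset_NJ hcont hcomm ih
    | limit β hβ ih =>
      rw [hFlim β hβ]
      exact subset_iInter₂ fun γ hγ => ih γ hγ
  -- existence of a fixed point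
  have hex : {γ : Ordinal | F (γ + 1) = F γ}.Nonempty := by
    by_contra h
    rw [Set.not_nonempty_iff_eq_empty] at h
    have hne : ∀ γ : Ordinal, F (γ + 1) ≠ F γ := by
      intro γ hγ
      exact absurd (Set.eq_empty_iff_forall_notMem.1 h γ) (fun hh => hh hγ)
    have hinj : Function.Injective F := by
      intro a b hab
      by_contra hne'
      rcases lt_or_gt_of_ne hne' with h' | h'
      · apply hne a
        have h1 : a + 1 ≤ b := by
          rw [Ordinal.add_one_eq_succ]; exact Order.succ_le_of_lt h'
        have h2 : F b ⊆ F (a + 1) := hmono _ _ h1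
        have h3 : F (a + 1) ⊆ F a := hmono _ _ (by
          rw [Ordinal.add_one_eq_succ]; exact Order.le_succ a)
        exact Subset.antisymm h3 (hab ▸ h2)
      · apply hne b
        have h1 : b + 1 ≤ a := by
          rw [Ordinal.add_one_eq_succ]; exact Order.succ_le_of_lt h'
        have h2 : F a ⊆ F (b + 1) := hmono _ _ h1
        have h3 : F (b + 1) ⊆ F b := hmono _ _ (by
          rw [Ordinal.add_one_eq_succ]; exact Order.le_succ b)
        exact Subset.antisymm h3 (hab ▸ h2)
    exact not_injective_of_ordinal F hinj
  obtain ⟨γ₀, hγ₀, hmin'⟩ := Ordinal.lt_wf.has_min _ hex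
  have hmin : ∀ γ : Ordinal, F (γ + 1) = F γ → γ₀ ≤ γ :=
    fun γ hγ => not_lt.1 (hmin' γ hγ)
  have hfix : NJ φ J (F γ₀) = F γ₀ := by rw [← hFsucc]; exact hγ₀
  refine ⟨⟨γ₀, hγ₀, hmin, Subset.antisymm
    (fixed_subset_closure hcont hcomm hfix) (part2 γ₀)⟩, part2⟩
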